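/- (Trace expansion of the angle–coefficient FIM term in Θ, eqs. (44)–(45).) Let ψ, a ∈ ℂ^N, G ∈ ℂ^{N×M}, R_s, W ∈ ℂ^{M×M}, and let Z ∈ ℂ^{N×N} be diagonal. Set A = diag(a), Θ = ψψ^H, C = G^T A (Z ψψ^T + ψψ^T Z) A G, H = G^T A ψψ^T A G, R_1 = A G R_s G^H A^H, and R_2 = A^H G^* W G^T A (where G^* is the entrywise complex conjugate of G). Then tr( C^H W H R_s ) = tr(R_1 Θ^T)·tr(Z^H R_2 Θ) + tr(R_1 Z^H Θ^T)·tr(R_2 Θ). -/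
import Mathlib

set_option linter.unusedSectionVars false

open Matrix Complex

variable {m n p : Type*} [Fintype m] [Fintype n] [Fintype p]

lemma mul_vmv (M : Matrix m n ℂ) (u : n → ℂ) (v : p → ℂ) :
    M * vecMulVec u v = vecMulVec (M *ᵥ u) v := by
  ext i j
  simp [Matrix.mul_apply, vecMulVec_apply, mulVec, dotProduct, Finset.sum_mul, mul_assoc]

lemma vmv_mul (u : m → ℂ) (v : n → ℂ) (M : Matrix n p ℂ) :
    vecMulVec u v * M = vecMulVec u (v ᵥ* M) := by
  ext i j
  simp [Matrix.mul_apply, vecMulVec_apply, vecMul, dotProduct, Finset.mul_sum, mul_assoc]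

lemma ct_vmv (u : m → ℂ) (v : n → ℂ) :
    (vecMulVec u v)ᴴ = vecMulVec (star v) (star u) := by
  ext i j; simp [vecMulVec_apply, mul_comm]

lemma t_vmv (u : m → ℂ) (v : n → ℂ) :
    (vecMulVec u v)ᵀ = vecMulVec v u := by
  ext i j; simp [vecMulVec_apply, mul_comm]

lemma vecMul_vmv (u : m → ℂ) (r : m → ℂ) (s : n → ℂ) :
    u ᵥ* vecMulVec r s = (u ⬝ᵥ r) • s := by
  ext j; simp [vecMul, vecMulVec_apply, dotProduct, Finset.sum_mul, mul_assoc]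

lemma vmv_smul (u : m → ℂ) (c : ℂ) (v : n → ℂ) :
    vecMulVec u (c • v) = c • vecMulVec u v := by
  ext i j; simp [vecMulVec_apply]; ring

lemma mulVec_vmv (r : m → ℂ) (s : n → ℂ) (u : n → ℂ) :
    vecMulVec r s *ᵥ u = (s ⬝ᵥ u) • r := by
  ext i
  simp only [mulVec, vecMulVec_apply, dotProduct, Pi.smul_apply, smul_eq_mul, Finset.sum_mul]
  exact Finset.sum_congr rfl fun _ _ => by ring

lemma mvdp (M : Matrix m n ℂ) (u : n → ℂ) (v : m → ℂ) :
    (M *ᵥ u) ⬝ᵥ v = (v ᵥ* M) ⬝ᵥ u := by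
  rw [dotProduct_comm, dotProduct_mulVec]

lemma tr_vmv (u v : n → ℂ) : Matrix.trace (vecMulVec u v) = u ⬝ᵥ v := by
  simp [Matrix.trace, vecMulVec_apply, dotProduct, Matrix.diag]

theorem stmt17 (N M : ℕ) (ψ a : Fin N → ℂ)
    (G : Matrix (Fin N) (Fin M) ℂ) (Rs W : Matrix (Fin M) (Fin M) ℂ)
    (z : Fin N → ℂ) (Z : Matrix (Fin N) (Fin N) ℂ) (hZ : Z = Matrix.diagonal z)
    (A Θ : Matrix (Fin N) (Fin N) ℂ)
    (hA : A = Matrix.diagonal a) (hΘ : Θ = Matrix.vecMulVec ψ (star ψ))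
    (C H : Matrix (Fin M) (Fin M) ℂ)
    (hC : C = Gᵀ * A * (Z * Matrix.vecMulVec ψ ψ + Matrix.vecMulVec ψ ψ * Z) * A * G)
    (hH : H = Gᵀ * A * Matrix.vecMulVec ψ ψ * A * G)
    (R1 R2 : Matrix (Fin N) (Fin N) ℂ)
    (hR1 : R1 = A * G * Rs * Gᴴ * Aᴴ)
    (hR2 : R2 = Aᴴ * G.map (starRingEnd ℂ) * W * Gᵀ * A) :
    Matrix.trace (Cᴴ * W * H * Rs)
      = Matrix.trace (R1 * Θᵀ) * Matrix.trace (Zᴴ * R2 * Θ)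
      + Matrix.trace (R1 * Zᴴ * Θᵀ) * Matrix.trace (R2 * Θ) := by
  subst hC hH hΘ hR1 hR2
  simp only [mul_add, add_mul, Matrix.mul_assoc, conjTranspose_add, conjTranspose_mul,
    conjTranspose_conjTranspose, t_vmv, ct_vmv, mul_vmv, vmv_mul, vecMul_vmv, vmv_smul,
    trace_add, trace_smul, tr_vmv, smul_eq_mul, transpose_mul, transpose_transpose,
    Matrix.add_mulVec, mulVec_vmv, Matrix.mulVec_smul, dotProduct_smul, smul_dotProduct,
    smul_eq_mul, Matrix.smul_mulVec, Matrix.mulVec_add, add_dotProduct, dotProduct_add]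
  simp only [star_mulVec, star_vecMul, dotProduct_mulVec, Matrix.vecMul_vecMul,
    conjTranspose_mul, conjTranspose_conjTranspose, Matrix.mul_assoc, star_star]
  rw [show (Gᵀ)ᴴ = G.map (starRingEnd ℂ) by ext i j; simp [conjTranspose_apply]]
  simp only [Matrix.mulVec_mulVec, mvdp, Matrix.vecMul_vecMul, Matrix.mul_assoc]
  ring
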